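/- Suppose ℓ is even, k ≥ 1, h = k + ℓ/2 − 1, and G is a graph containing h vertices v₁,…,v_h each of degree at least (1 − 5/(6(h+1)))n, with n sufficiently large (n ≥ 8(h+1)³((ℓ²−ℓ+1)k + (ℓ²+3ℓ−2)/2)⁸). If additionally G contains h+1 such vertices of degree at least (1 − 5/(6(h+2)))n, then G contains kS_{ℓ−1} ∪ P_ℓ as a subgraph. -/

import Mathlib

open SimpleGraph Finset

/-- `G` contains a copy of `H` (as a subgraph). -/
def Contains {α β : Type*} (G : SimpleGraph α) (H : SimpleGraph β) : Prop :=
  ∃ f : H →g G, Function.Injective f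

/-- The star on `m` vertices with center `0` (so `m - 1` leaves), i.e. `S_{m-1}`. -/
def starGraph (m : ℕ) : SimpleGraph (Fin m) where
  Adj i j := i ≠ j ∧ ((i : ℕ) = 0 ∨ (j : ℕ) = 0)
  symm := ⟨fun _ _ h => ⟨h.1.symm, h.2.symm⟩⟩
  loopless := ⟨fun _ h => h.1 rfl⟩

/-- `k` disjoint copies of a graph `G`. -/
def kCopies {α : Type*} (k : ℕ) (G : SimpleGraph α) : SimpleGraph (Fin k × α) where
  Adj x y := x.1 = y.1 ∧ G.Adj x.2 y.2
  symm := ⟨fun _ _ h => ⟨h.1.symm, h.2.symm⟩⟩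
  loopless := ⟨fun _ h => G.loopless.irrefl _ h.2⟩

/-- The star-path forest `k·S_{ℓ-1} ∪ P_ℓ`. -/
def starPathForest (k ℓ : ℕ) : SimpleGraph (Fin k × Fin ℓ ⊕ Fin ℓ) :=
  kCopies k (starGraph ℓ) ⊕g pathGraph ℓ

lemma mul_add_inj' {a b c d m : ℕ} (hb : b < m) (hd : d < m)
    (h : a * m + b = c * m + d) : a = c ∧ b = d := by
  have hm : 0 < m := by omega
  have e1 : (b + a * m) / m = a := by
    rw [Nat.add_mul_div_right _ _ hm, Nat.div_eq_of_lt hb, Nat.zero_add]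
  have e2 : (d + c * m) / m = c := by
    rw [Nat.add_mul_div_right _ _ hm, Nat.div_eq_of_lt hd, Nat.zero_add]
  have hac : a = c := by rw [← e1, ← e2]; congr 1; omega
  subst hac
  exact ⟨rfl, by omega⟩

lemma aux_contains {n k ℓ : ℕ} (hk : 1 ≤ k) (hℓ2 : 2 ≤ ℓ) (hℓe : ℓ % 2 = 0)
    (G : SimpleGraph (Fin n))
    (w : Fin (k + ℓ / 2) → Fin n) (hw : Function.Injective w)
    (u : Fin (k * (ℓ - 1) + ℓ / 2) → Fin n) (hu : Function.Injective u)
    (hadj : ∀ a i, G.Adj (w i) (u a))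
    (hne : ∀ a i, u a ≠ w i) :
    Contains G (starPathForest k ℓ) := by
  let F : (Fin k × Fin ℓ ⊕ Fin ℓ) → Fin n := Sum.elim
      (fun p => if h0 : ((p.2 : ℕ) = 0)
        then w ⟨(p.1 : ℕ), by have := p.1.isLt; omega⟩
        else u ⟨(p.1 : ℕ) * (ℓ - 1) + ((p.2 : ℕ) - 1), by
          have h1 : ((p.1 : ℕ) + 1) * (ℓ - 1) ≤ k * (ℓ - 1) :=
            Nat.mul_le_mul_right _ p.1.isLt
          have h2 := p.2.isLt
          rw [add_mul] at h1
          omega⟩)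
      (fun p => if h0 : ((p : ℕ) % 2 = 0)
        then w ⟨k + (p : ℕ) / 2, by have := p.isLt; omega⟩
        else u ⟨k * (ℓ - 1) + (p : ℕ) / 2, by have := p.isLt; omega⟩)
  have hFmap : ∀ {a b}, (starPathForest k ℓ).Adj a b → G.Adj (F a) (F b) := by
    rintro (⟨i, j⟩ | p) (⟨i', j'⟩ | p') hab
    · have hab' : (i = i' ∧ (j ≠ j' ∧ ((j : ℕ) = 0 ∨ (j' : ℕ) = 0))) := SimpleGraph.sum_adj_inl.mp hab
      obtain ⟨he, hjj, h0⟩ := hab'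
      simp only [F, Sum.elim_inl]
      split_ifs with hj hj' hj'
      · exact absurd (Fin.val_injective (hj.trans hj'.symm)) hjj
      · exact hadj _ _
      · exact (hadj _ _).symm
      · omega
    · exact absurd hab (by simp [starPathForest, SimpleGraph.sum])
    · exact absurd hab (by simp [starPathForest, SimpleGraph.sum])
    · have hab' : (pathGraph ℓ).Adj p p' := hab
      rw [pathGraph_adj] at hab'
      simp only [F, Sum.elim_inr]
      split_ifs with hp hp' hp'
      · omega
      · exact hadj _ _
      · exact (hadj _ _).symm
      · omega
  have hFinj : Function.Injective F := by
    rintro (⟨i, j⟩ | p) (⟨i', j'⟩ | p') hab <;>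
      simp only [F, Sum.elim_inl, Sum.elim_inr] at hab <;>
      split_ifs at hab with h1 h2 h2
    · have := hw hab
      rw [Fin.mk.injEq] at this
      simp only [Sum.inl.injEq, Prod.mk.injEq]
      exact ⟨Fin.val_injective this, Fin.val_injective (by omega)⟩
    · exact absurd hab.symm (hne _ _)
    · exact absurd hab (hne _ _)
    · have := hu hab
      rw [Fin.mk.injEq] at this
      obtain ⟨hii, hjj⟩ := mul_add_inj' (by have := j.isLt; omega)
        (by have := j'.isLt; omega) this
      simp only [Sum.inl.injEq, Prod.mk.injEq]
      exact ⟨Fin.val_injective hii, Fin.val_injective (by omega)⟩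
    · have := hw hab
      rw [Fin.mk.injEq] at this
      have := i.isLt
      omega
    · exact absurd hab.symm (hne _ _)
    · exact absurd hab (hne _ _)
    · have := hu hab
      rw [Fin.mk.injEq] at this
      have h3 : ((i : ℕ) + 1) * (ℓ - 1) ≤ k * (ℓ - 1) := Nat.mul_le_mul_right _ i.isLt
      rw [add_mul] at h3
      have := j.isLt
      omega
    · have := hw hab
      rw [Fin.mk.injEq] at this
      have := i'.isLt
      omega
    · exact absurd hab.symm (hne _ _)
    · exact absurd hab (hne _ _)
    · have := hu hab
      rw [Fin.mk.injEq] at this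
      have h3 : ((i' : ℕ) + 1) * (ℓ - 1) ≤ k * (ℓ - 1) := Nat.mul_le_mul_right _ i'.isLt
      rw [add_mul] at h3
      have := j'.isLt
      omega
    · have := hw hab
      rw [Fin.mk.injEq] at this
      have hp := p.isLt; have hp' := p'.isLt
      exact congrArg Sum.inr (Fin.val_injective (by omega))
    · exact absurd hab.symm (hne _ _)
    · exact absurd hab (hne _ _)
    · have := hu hab
      rw [Fin.mk.injEq] at this
      have hp := p.isLt; have hp' := p'.isLt
      exact congrArg Sum.inr (Fin.val_injective (by omega))
  exact ⟨⟨F, hFmap⟩, hFinj⟩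

lemma arith1 (h a c : ℕ) (h2 : 6*(h+2)*a ≤ (h+1)*(5*(a+c))) : (h+7)*(a+c) ≤ 6*(h+2)*c := by nlinarith
lemma arith2 (k q t h : ℕ) (hk : 1 ≤ k) (ht : t = (4*q^2+6*q+3)*k + (2*q^2+7*q+4)) (hh : h = k + q) :
    k*(2*q+1) + (q+1) + (h+1) ≤ t := by subst ht hh; nlinarith [sq_nonneg q]
lemma arith3 (k q t : ℕ) (hk : 1 ≤ k) (ht : t = (4*q^2+6*q+3)*k+(2*q^2+7*q+4)) : 4 ≤ t := by
  subst ht; nlinarith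

/-- Suppose `ℓ` is even, `k ≥ 1`, `h = k + ℓ/2 − 1`, `t = (ℓ²−ℓ+1)k + (ℓ²+3ℓ−2)/2` and
`n ≥ 8(h+1)³t⁸`.  If a graph `G` of order `n` contains `h` (distinct) vertices each of
degree at least `(1 − 5/(6(h+1)))n`, and moreover contains `h+1` (distinct) vertices each
of degree at least `(1 − 5/(6(h+2)))n`, then `G` contains `kS_{ℓ−1} ∪ P_ℓ`. -/
theorem star_path_forest_stmt15 (n k ℓ h t : ℕ) (hℓeven : Even ℓ) (hk : 1 ≤ k)
    (hh : h = k + ℓ / 2 - 1) (ht : t = (ℓ ^ 2 - ℓ + 1) * k + (ℓ ^ 2 + 3 * ℓ - 2) / 2)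
    (hn : 8 * (h + 1) ^ 3 * t ^ 8 ≤ n)
    (G : SimpleGraph (Fin n)) [DecidableRel G.Adj]
    (v : Fin h → Fin n) (hv : Function.Injective v)
    (hvdeg : ∀ i, (1 - 5 / (6 * ((h : ℝ) + 1))) * n ≤ (G.degree (v i) : ℝ))
    (w : Fin (h + 1) → Fin n) (hw : Function.Injective w)
    (hwdeg : ∀ i, (1 - 5 / (6 * ((h : ℝ) + 2))) * n ≤ (G.degree (w i) : ℝ)) :
    Contains G (starPathForest k ℓ) := by
  classical
  rcases Nat.eq_zero_or_pos ℓ with rfl | hℓpos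
  · exact ⟨⟨fun x => isEmptyElim x, fun {a b} hadj => isEmptyElim a⟩,
      fun a b _ => isEmptyElim a⟩
  have hℓe' : ℓ % 2 = 0 := Nat.even_iff.mp hℓeven
  have hℓ2 : 2 ≤ ℓ := by omega
  obtain ⟨q', rfl⟩ : ∃ q', ℓ = 2 * q' + 2 := ⟨ℓ / 2 - 1, by omega⟩
  have hsq : (2 * q' + 2) ^ 2 = 4 * q' ^ 2 + 8 * q' + 4 := by ring
  have e1 : (2 * q' + 2) ^ 2 - (2 * q' + 2) + 1 = 4 * q' ^ 2 + 6 * q' + 3 := by omega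
  have e2 : ((2 * q' + 2) ^ 2 + 3 * (2 * q' + 2) - 2) / 2 = 2 * q' ^ 2 + 7 * q' + 4 := by
    omega
  rw [e1, e2] at ht
  have hh1 : h = k + q' := by omega
  -- the common neighborhood of the w i
  set W : Finset (Fin n) := Finset.univ.filter (fun x => ∀ i, G.Adj (w i) x) with hWdef
  have hdeg : ∀ i, 6 * (h + 2) * (n - G.degree (w i)) ≤ 5 * n := by
    intro i
    have h2 : G.degree (w i) ≤ n := by
      have := (G.degree_lt_card_verts (w i)).le
      simpa using this
    have hr := hwdeg i
    have hpos : (0 : ℝ) < 6 * ((h : ℝ) + 2) := by positivity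
    have hexp : (1 - 5 / (6 * ((h : ℝ) + 2))) * n * (6 * ((h : ℝ) + 2)) =
        6 * ((h : ℝ) + 2) * n - 5 * n := by
      field_simp
    have hx : (1 - 5 / (6 * ((h : ℝ) + 2))) * n * (6 * ((h : ℝ) + 2)) ≤
        (G.degree (w i) : ℝ) * (6 * ((h : ℝ) + 2)) :=
      mul_le_mul_of_nonneg_right hr hpos.le
    rw [hexp] at hx
    have keyn : ((6 * (h + 2) * (n - G.degree (w i)) : ℕ) : ℝ) ≤ ((5 * n : ℕ) : ℝ) := by
      push_cast [Nat.cast_sub h2]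
      nlinarith [hx]
    exact_mod_cast keyn
  have hWcard : n - W.card ≤ ∑ i : Fin (h + 1), (n - G.degree (w i)) := by
    have hsub : Finset.univ \ W ⊆
        Finset.univ.biUnion (fun i => Finset.univ \ G.neighborFinset (w i)) := by
      intro x hx
      simp only [hWdef, Finset.mem_sdiff, Finset.mem_filter, Finset.mem_univ, true_and,
        Finset.mem_biUnion] at hx ⊢
      push_neg at hx
      obtain ⟨i, hi⟩ := hx
      exact ⟨i, by simp [SimpleGraph.mem_neighborFinset, hi]⟩
    calc n - W.card = (Finset.univ \ W).card := by
          rw [Finset.card_sdiff_of_subset (Finset.subset_univ _), Finset.card_univ, Fintype.card_fin]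
      _ ≤ _ := Finset.card_le_card hsub
      _ ≤ ∑ i : Fin (h + 1), (Finset.univ \ G.neighborFinset (w i)).card :=
          Finset.card_biUnion_le
      _ = ∑ i : Fin (h + 1), (n - G.degree (w i)) := by
          refine Finset.sum_congr rfl fun i _ => ?_
          rw [Finset.card_sdiff_of_subset (Finset.subset_univ _), Finset.card_univ, Fintype.card_fin]
          rfl
  have hW2 : 6 * (h + 2) * (n - W.card) ≤ (h + 1) * (5 * n) := by
    calc 6 * (h + 2) * (n - W.card)
        ≤ 6 * (h + 2) * ∑ i : Fin (h + 1), (n - G.degree (w i)) :=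
          Nat.mul_le_mul_left _ hWcard
      _ = ∑ i : Fin (h + 1), 6 * (h + 2) * (n - G.degree (w i)) := by rw [Finset.mul_sum]
      _ ≤ ∑ _i : Fin (h + 1), 5 * n := Finset.sum_le_sum fun i _ => hdeg i
      _ = (h + 1) * (5 * n) := by
          rw [Finset.sum_const, Finset.card_univ, Fintype.card_fin, smul_eq_mul]
  have hcn : W.card ≤ n := by
    have := Finset.card_le_univ W
    simpa using this
  have hWn : (h + 7) * n ≤ 6 * (h + 2) * W.card := by
    have hd : n = (n - W.card) + W.card := by omega
    have := arith1 h (n - W.card) W.card (by rw [← hd]; exact hW2)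
    rwa [← hd] at this
  have harith : 6 * (h + 2) * (k * (2 * q' + 2 - 1) + (2 * q' + 2) / 2 + (h + 1)) ≤
      (h + 7) * n := by
    have e3 : 2 * q' + 2 - 1 = 2 * q' + 1 := by omega
    have e4 : (2 * q' + 2) / 2 = q' + 1 := by omega
    have hM : k * (2 * q' + 2 - 1) + (2 * q' + 2) / 2 + (h + 1) ≤ t := by
      rw [e3, e4]
      exact arith2 k q' t h hk ht hh1
    have ht4 : 4 ≤ t := arith3 k q' t hk ht
    have htt : t ≤ t ^ 8 := Nat.le_self_pow (by norm_num) t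
    have hp3 : h + 1 ≤ (h + 1) ^ 3 := Nat.le_self_pow (by norm_num) _
    calc 6 * (h + 2) * (k * (2 * q' + 2 - 1) + (2 * q' + 2) / 2 + (h + 1))
        ≤ 6 * (h + 2) * t := Nat.mul_le_mul_left _ hM
      _ ≤ 56 * (h + 1) * t := Nat.mul_le_mul_right _ (by omega)
      _ ≤ 56 * (h + 1) ^ 3 * t := Nat.mul_le_mul_right _ (by
          have := hp3; omega)
      _ ≤ 56 * (h + 1) ^ 3 * t ^ 8 := Nat.mul_le_mul_left _ htt
      _ = 7 * (8 * (h + 1) ^ 3 * t ^ 8) := by ring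
      _ ≤ (h + 7) * (8 * (h + 1) ^ 3 * t ^ 8) := Nat.mul_le_mul_right _ (by omega)
      _ ≤ (h + 7) * n := Nat.mul_le_mul_left _ hn
  have hMW : k * (2 * q' + 2 - 1) + (2 * q' + 2) / 2 + (h + 1) ≤ W.card :=
    Nat.le_of_mul_le_mul_left (harith.trans hWn) (by omega)
  have hW' : k * (2 * q' + 2 - 1) + (2 * q' + 2) / 2 ≤ (W \ Finset.image w Finset.univ).card := by
    have h1 : (Finset.image w Finset.univ).card ≤ h + 1 :=
      (Finset.card_image_le).trans (by simp)
    have h2 := Finset.le_card_sdiff (Finset.image w Finset.univ) W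
    omega
  obtain ⟨S, hSsub, hScard⟩ := Finset.exists_subset_card_eq hW'
  set u : Fin (k * (2 * q' + 2 - 1) + (2 * q' + 2) / 2) → Fin n :=
    fun a => (S.orderIsoOfFin hScard a : Fin n) with hudef
  have hu : Function.Injective u := fun a b e =>
    (S.orderIsoOfFin hScard).injective (Subtype.ext e)
  have hmem : ∀ a, u a ∈ W \ Finset.image w Finset.univ :=
    fun a => hSsub (S.orderIsoOfFin hScard a).2
  have hadj : ∀ a i, G.Adj (w i) (u a) := by
    intro a i
    have h3 := (Finset.mem_sdiff.mp (hmem a)).1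
    rw [hWdef, Finset.mem_filter] at h3
    exact h3.2 i
  have hne : ∀ a i, u a ≠ w i := by
    intro a i he
    exact (Finset.mem_sdiff.mp (hmem a)).2
      (Finset.mem_image.mpr ⟨i, Finset.mem_univ _, he.symm⟩)
  have hcast : h + 1 = k + (2 * q' + 2) / 2 := by omega
  exact aux_contains hk hℓ2 hℓe' G (fun i => w (Fin.cast hcast.symm i))
    (hw.comp (Fin.cast_injective _)) u hu (fun a i => hadj a _) (fun a i => hne a _)
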